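/- For natural numbers a, d, n with n ≤ d, the function f(a,d,n)_x = Σ_{k=0}^{d−n} C(a+d+x−k, k)·C(d+k−x, d−n−k) (with C(y,k) = y(y−1)···(y−k+1)/k! a polynomial in y) is constant as a polynomial in x. -/

import Mathlib

open Finset

/-- Generalized binomial coefficient `C(y,k) = y(y-1)⋯(y-k+1)/k!`. -/
noncomputable def gchoose (y : ℚ) (k : ℕ) : ℚ := (descPochhammer ℚ k).eval y / (k.factorial : ℚ)

lemma gchoose_zero (y : ℚ) : gchoose y 0 = 1 := by
  simp [gchoose]

lemma gchoose_pascal (y : ℚ) (k : ℕ) :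
    gchoose (y + 1) (k + 1) = gchoose y (k + 1) + gchoose y k := by
  have h1 : (descPochhammer ℚ (k+1)).eval (y+1) = (y+1) * (descPochhammer ℚ k).eval y := by
    rw [descPochhammer_succ_left]
    simp [Polynomial.eval_comp]
  have h2 : (descPochhammer ℚ (k+1)).eval y = (descPochhammer ℚ k).eval y * (y - k) := by
    rw [descPochhammer_succ_right]
    simp
  unfold gchoose
  rw [h1, h2, Nat.factorial_succ]
  have hk : (k.factorial : ℚ) ≠ 0 := Nat.cast_ne_zero.mpr k.factorial_ne_zero
  have hk1 : ((k:ℚ) + 1) ≠ 0 := by positivity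
  field_simp
  push_cast
  ring

/-- The key sum, as a function of `m`, `u`, `v`. -/
noncomputable def S (m : ℕ) (u v : ℚ) : ℚ :=
  ∑ k ∈ Finset.range (m + 1), gchoose (u - k) k * gchoose (v + k) (m - k)

lemma S_rec1 (m : ℕ) (u v : ℚ) :
    S (m + 1) u v = S (m + 1) u (v - 1) + S m u (v - 1) := by
  unfold S
  rw [Finset.sum_range_succ, Finset.sum_range_succ (n := m + 1)]
  have h : ∀ k ∈ Finset.range (m + 1),
      gchoose (u - k) k * gchoose (v + k) (m + 1 - k)
        = gchoose (u - k) k * gchoose (v - 1 + k) (m + 1 - k)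
          + gchoose (u - k) k * gchoose (v - 1 + k) (m - k) := by
    intro k hk
    rw [Finset.mem_range] at hk
    have hle : k ≤ m := Nat.lt_succ_iff.mp hk
    have hm : m + 1 - k = (m - k) + 1 := by omega
    have hv : v + k = (v - 1 + k) + 1 := by ring
    rw [hm, hv, gchoose_pascal]
    ring
  rw [Finset.sum_congr rfl h, Finset.sum_add_distrib]
  simp [gchoose_zero]
  ring

lemma S_rec2 (m : ℕ) (u v : ℚ) :
    S (m + 1) u v = S (m + 1) (u - 1) v + S m (u - 2) (v + 1) := by
  unfold S
  have h : ∀ k ∈ Finset.range (m + 2),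
      gchoose (u - k) k * gchoose (v + k) (m + 1 - k)
        = gchoose (u - 1 - k) k * gchoose (v + k) (m + 1 - k)
          + (if k = 0 then 0 else
              gchoose (u - 1 - k) (k - 1) * gchoose (v + k) (m + 1 - k)) := by
    intro k _
    rcases k with _ | j
    · simp [gchoose_zero]
    · rw [if_neg (Nat.succ_ne_zero j)]
      have hu : u - (j+1 : ℕ) = (u - 1 - (j+1 : ℕ)) + 1 := by push_cast; ring
      rw [hu, gchoose_pascal]
      simp
      ring
  rw [Finset.sum_congr rfl h, Finset.sum_add_distrib]
  congr 1
  rw [Finset.sum_range_succ']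
  rw [if_pos rfl, add_zero]
  apply Finset.sum_congr rfl
  intro j hj
  rw [Finset.mem_range] at hj
  rw [if_neg (Nat.succ_ne_zero j)]
  have h1 : (((j:ℕ)+1 : ℕ) : ℚ) = (j:ℚ) + 1 := by push_cast; ring
  have h2 : u - 1 - ((j+1 : ℕ) : ℚ) = u - 2 - j := by push_cast; ring
  have h3 : v + ((j+1 : ℕ) : ℚ) = v + 1 + j := by push_cast; ring
  have h4 : m + 1 - (j + 1) = m - j := by omega
  rw [h2, h3, h4]
  simp

lemma S_shift (m : ℕ) : ∀ u v : ℚ, S m (u + 1) (v - 1) = S m u v := by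
  induction m with
  | zero => intro u v; simp [S, gchoose_zero]
  | succ m ih =>
    intro u v
    rw [S_rec2, S_rec1 m u v]
    have e1 : u + 1 - 1 = u := by ring
    have e2 : u + 1 - 2 = u - 1 := by ring
    have e3 : v - 1 + 1 = v := by ring
    rw [e1, e2, e3]
    congr 1
    have := ih (u - 1) v
    rw [show u - 1 + 1 = u by ring] at this
    exact this.symm

lemma S_shift_nat (m : ℕ) (u v : ℚ) : ∀ t : ℕ, S m (u + t) (v - t) = S m u v := by
  intro t
  induction t with
  | zero => simp
  | succ t ih =>
    have : S m (u + t + 1) (v - t - 1) = S m (u + t) (v - t) := S_shift m (u + t) (v - t)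
    rw [← ih, ← this]
    congr 1 <;> push_cast <;> ring

/-- Polynomial whose evaluation at `t` is `S m (u+t) (v-t)`. -/
noncomputable def SP (m : ℕ) (u v : ℚ) : Polynomial ℚ :=
  ∑ k ∈ Finset.range (m + 1),
    Polynomial.C (1 / ((k.factorial : ℚ) * ((m - k).factorial : ℚ))) *
      ((descPochhammer ℚ k).comp (Polynomial.C (u - k) + Polynomial.X)) *
      ((descPochhammer ℚ (m - k)).comp (Polynomial.C (v + k) - Polynomial.X))

lemma SP_eval (m : ℕ) (u v t : ℚ) : (SP m u v).eval t = S m (u + t) (v - t) := by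
  unfold SP S
  rw [Polynomial.eval_finset_sum]
  apply Finset.sum_congr rfl
  intro k _
  simp only [Polynomial.eval_mul, Polynomial.eval_comp, Polynomial.eval_add,
    Polynomial.eval_sub, Polynomial.eval_C, Polynomial.eval_X]
  unfold gchoose
  rw [show u - k + t = u + t - k by ring, show v + k - t = v - t + k by ring]
  field_simp

lemma S_const (m : ℕ) (u v x : ℚ) : S m (u + x) (v - x) = S m u v := by
  have hQ : SP m u v - Polynomial.C (S m u v) = 0 := by
    apply Polynomial.eq_zero_of_infinite_isRoot
    apply Set.Infinite.mono (s := Set.range ((↑·) : ℕ → ℚ))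
    · intro z hz
      obtain ⟨n, rfl⟩ := hz
      simp only [Set.mem_setOf_eq, Polynomial.IsRoot, Polynomial.eval_sub,
        Polynomial.eval_C, SP_eval, S_shift_nat, sub_self]
    · exact Set.infinite_range_of_injective Nat.cast_injective
  have h1 : (SP m u v).eval x = S m u v := by
    have := congrArg (Polynomial.eval x) hQ
    simp only [Polynomial.eval_sub, Polynomial.eval_C, Polynomial.eval_zero] at this
    linarith
  rw [← SP_eval, h1]

theorem f_const (a d n : ℕ) (hnd : n ≤ d) (x y : ℚ) :
    ∑ k ∈ Finset.range (d - n + 1), gchoose ((a : ℚ) + d + x - k) k * gchoose ((d : ℚ) + k - x) (d - n - k) =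
      ∑ k ∈ Finset.range (d - n + 1), gchoose ((a : ℚ) + d + y - k) k * gchoose ((d : ℚ) + k - y) (d - n - k) := by
  have key : ∀ z : ℚ, ∑ k ∈ Finset.range (d - n + 1),
      gchoose ((a : ℚ) + d + z - k) k * gchoose ((d : ℚ) + k - z) (d - n - k)
        = S (d - n) ((a : ℚ) + d) (d : ℚ) := by
    intro z
    rw [← S_const (d - n) ((a : ℚ) + d) (d : ℚ) z]
    unfold S
    apply Finset.sum_congr rfl
    intro k _
    congr 1 <;> congr 1 <;> ring
  rw [key x, key y]
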